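/- For every ξ ∈ ℝ³ the matrix A(ξ) is Hermitian, every eigenvalue of A(ξ) is at least |ξ|² + 1 − √(|ξ|² + 1) ≥ |ξ|²/2, and consequently for every t ≥ 0 the operator norm (with respect to the Euclidean norm on ℂ⁶) of the matrix exponential e^{−tA(ξ)} satisfies ‖e^{−tA(ξ)}‖ ≤ e^{−t(|ξ|²+1−√(|ξ|²+1))} ≤ e^{−t|ξ|²/2}. -/

import Mathlib

open MeasureTheory ENNReal Real Filter
open scoped RealInnerProductSpace

noncomputable section

/-- Physical/frequency space ℝ³ with the Euclidean norm. -/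
abbrev R3 := EuclideanSpace ℝ (Fin 3)

/-- Vector values ℂ⁶ = ℂ³ × ℂ³ (velocity and micro-rotation components). -/
abbrev C6 := (Fin 3 ⊕ Fin 3) → ℂ
/-- The 3×3 matrix B(ξ) = i·[[0, ξ₃, −ξ₂], [−ξ₃, 0, ξ₁], [ξ₂, −ξ₁, 0]]. -/
def Bm (ξ : R3) : Matrix (Fin 3) (Fin 3) ℂ :=
  Complex.I • Matrix.of
    ![![0, (ξ 2 : ℂ), -(ξ 1 : ℂ)],
      ![-(ξ 2 : ℂ), 0, (ξ 0 : ℂ)],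
      ![(ξ 1 : ℂ), -(ξ 0 : ℂ), 0]]

/-- The 3×3 matrix C(ξ) = ξξᵀ with entries ξ_iξ_j. -/
def Cm (ξ : R3) : Matrix (Fin 3) (Fin 3) ℂ :=
  Matrix.of fun i j => ((ξ i * ξ j : ℝ) : ℂ)

/-- The 6×6 symbol A(ξ) = [[|ξ|²I₃, B(ξ)], [B(ξ), (|ξ|²+2)I₃ + C(ξ)]] of the
linearized micropolar system (κ = μ = 1, χ = ν = 1/2). -/
def Am (ξ : R3) : Matrix (Fin 3 ⊕ Fin 3) (Fin 3 ⊕ Fin 3) ℂ :=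
  Matrix.fromBlocks (((‖ξ‖ ^ 2 : ℝ) : ℂ) • 1) (Bm ξ) (Bm ξ)
    (((‖ξ‖ ^ 2 + 2 : ℝ) : ℂ) • 1 + Cm ξ)

/-- The semigroup symbol e^{−tA(ξ)}. -/
def expM (t : ℝ) (ξ : R3) : Matrix (Fin 3 ⊕ Fin 3) (Fin 3 ⊕ Fin 3) ℂ :=
  NormedSpace.exp ((-(t : ℂ)) • Am ξ)

open Matrix in
/-- Operator norm bound for a diagonal matrix acting on Euclidean space. -/
lemma micropolar_diag_norm_le {n : Type*} [Fintype n] [DecidableEq n] (v : n → ℂ) (b : ℝ)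
    (hb : 0 ≤ b) (hv : ∀ i, ‖v i‖ ≤ b) :
    ‖Matrix.toEuclideanCLM (𝕜 := ℂ) (Matrix.diagonal v)‖ ≤ b := by
  apply ContinuousLinearMap.opNorm_le_bound _ hb
  intro x
  have hx : ∀ y : EuclideanSpace ℂ n, ‖y‖ = Real.sqrt (∑ i, ‖y i‖^2) := by
    intro y; rw [EuclideanSpace.norm_eq]
  rw [hx, hx]
  rw [← Real.sqrt_sq hb, ← Real.sqrt_mul (by positivity)]
  apply Real.sqrt_le_sqrt
  rw [Finset.mul_sum]
  apply Finset.sum_le_sum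
  intro i _
  have h1 : (Matrix.toEuclideanCLM (𝕜 := ℂ) (Matrix.diagonal v) x) i = v i * x i := by
    have := Matrix.ofLp_toEuclideanCLM (𝕜 := ℂ) (Matrix.diagonal v) x
    have h2 := congrFun this i
    simpa [Matrix.toLin'_apply, Matrix.mulVec_diagonal] using h2
  rw [h1, norm_mul, mul_pow]
  gcongr
  exact hv i

set_option maxHeartbeats 1000000 in
open Matrix in
open scoped ComplexOrder in
lemma micropolar_posSemidef (ξ : R3) :
    (Am ξ - ((‖ξ‖ ^ 2 + 1 - Real.sqrt (‖ξ‖ ^ 2 + 1) : ℝ) : ℂ) • 1).PosSemidef := by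
  set s := Real.sqrt (‖ξ‖ ^ 2 + 1) with hsdef
  have hs1 : 1 ≤ s := by
    rw [hsdef]
    nlinarith [Real.sq_sqrt (show (0:ℝ) ≤ ‖ξ‖^2+1 by positivity),
      Real.sqrt_nonneg (‖ξ‖^2+1), sq_nonneg (‖ξ‖ : ℝ)]
  have hs2 : s^2 = ‖ξ‖^2 + 1 := Real.sq_sqrt (by positivity)
  have hn : ‖ξ‖^2 = ξ 0^2 + ξ 1^2 + ξ 2^2 := by
    simp [EuclideanSpace.norm_eq, Fin.sum_univ_three]
    rw [Real.sq_sqrt (by positivity)]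
  have hr2c : ((‖ξ‖:ℝ):ℂ)^2 = (s:ℂ)^2 - 1 := by
    have : (s:ℝ)^2 - 1 = ‖ξ‖^2 := by linarith
    rw [show ((‖ξ‖:ℝ):ℂ)^2 = (((‖ξ‖^2 : ℝ)):ℂ) by push_cast; ring, ← this]
    push_cast; ring
  rw [Matrix.posSemidef_iff_dotProduct_mulVec]
  constructor
  · have hH : (Am ξ).IsHermitian := by
      ext i j
      rcases i with i | i <;> rcases j with j | j <;> fin_cases i <;> fin_cases j <;>
        simp [Matrix.IsHermitian, Am, Bm, Cm, Matrix.conjTranspose_apply, Matrix.fromBlocks,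
          Matrix.one_apply, mul_comm]
    refine hH.sub ?_
    unfold Matrix.IsHermitian
    rw [Matrix.conjTranspose_smul, Matrix.conjTranspose_one]
    congr 1
    exact Complex.conj_ofReal _
  intro x
  set u0 := x (Sum.inl 0); set u1 := x (Sum.inl 1); set u2 := x (Sum.inl 2)
  set w0 := x (Sum.inr 0); set w1 := x (Sum.inr 1); set w2 := x (Sum.inr 2)
  set q0 : ℂ := (ξ 0 : ℂ); set q1 : ℂ := (ξ 1 : ℂ); set q2 : ℂ := (ξ 2 : ℂ)
  have expand : dotProduct (star x)
      ((Am ξ - ((‖ξ‖ ^ 2 + 1 - s : ℝ) : ℂ) • 1) *ᵥ x) =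
      ((s:ℂ) - 1) * ((starRingEnd ℂ) u0 * u0 + (starRingEnd ℂ) u1 * u1 + (starRingEnd ℂ) u2 * u2)
      + ((s:ℂ) + 1) * ((starRingEnd ℂ) w0 * w0 + (starRingEnd ℂ) w1 * w1 + (starRingEnd ℂ) w2 * w2)
      + (q0 * (starRingEnd ℂ) w0 + q1 * (starRingEnd ℂ) w1 + q2 * (starRingEnd ℂ) w2)
        * (q0 * w0 + q1 * w1 + q2 * w2)
      + Complex.I *
        ((starRingEnd ℂ) u0 * (q2 * w1 - q1 * w2) + (starRingEnd ℂ) u1 * (q0 * w2 - q2 * w0)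
          + (starRingEnd ℂ) u2 * (q1 * w0 - q0 * w1)
          + (starRingEnd ℂ) w0 * (q2 * u1 - q1 * u2) + (starRingEnd ℂ) w1 * (q0 * u2 - q2 * u0)
          + (starRingEnd ℂ) w2 * (q1 * u0 - q0 * u1)) := by
    simp only [dotProduct, Matrix.mulVec, Am, Bm, Cm, Matrix.sub_apply, Matrix.smul_apply,
      Matrix.add_apply, Matrix.one_apply, Matrix.fromBlocks_apply₁₁, Matrix.fromBlocks_apply₁₂,
      Matrix.fromBlocks_apply₂₁, Matrix.fromBlocks_apply₂₂, Fintype.sum_sum_type,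
      Fin.sum_univ_three, Matrix.of_apply, Pi.star_apply, RCLike.star_def,
      Matrix.cons_val', Matrix.cons_val_zero, Matrix.cons_val_one, Matrix.head_cons,
      Matrix.head_fin_const, Matrix.empty_val', Matrix.cons_val_fin_one,
      Sum.inl.injEq, Sum.inr.injEq, reduceCtorEq, if_true, if_false, smul_eq_mul,
      Fin.isValue]
    push_cast
    rw [hr2c]
    norm_num
    ring
  rw [expand]
  have hs2c : (s:ℂ)^2 = q0^2 + q1^2 + q2^2 + 1 := by
    have : ((s^2 : ℝ) : ℂ) = (((ξ 0^2 + ξ 1^2 + ξ 2^2 + 1 : ℝ)) : ℂ) := by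
      rw [hs2, hn]
    push_cast at this
    simpa [q0, q1, q2] using this
  set z0 : ℂ := ((s:ℂ)+1) * w0 + Complex.I*(q2*u1 - q1*u2) with hz0
  set z1 : ℂ := ((s:ℂ)+1) * w1 + Complex.I*(q0*u2 - q2*u0) with hz1
  set z2 : ℂ := ((s:ℂ)+1) * w2 + Complex.I*(q1*u0 - q0*u1) with hz2
  set zu : ℂ := q0*u0 + q1*u1 + q2*u2 with hzu
  set zw : ℂ := q0*w0 + q1*w1 + q2*w2 with hzw
  set E : ℂ :=
      ((s:ℂ) - 1) * ((starRingEnd ℂ) u0 * u0 + (starRingEnd ℂ) u1 * u1 + (starRingEnd ℂ) u2 * u2)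
      + ((s:ℂ) + 1) * ((starRingEnd ℂ) w0 * w0 + (starRingEnd ℂ) w1 * w1 + (starRingEnd ℂ) w2 * w2)
      + (q0 * (starRingEnd ℂ) w0 + q1 * (starRingEnd ℂ) w1 + q2 * (starRingEnd ℂ) w2)
        * (q0 * w0 + q1 * w1 + q2 * w2)
      + Complex.I *
        ((starRingEnd ℂ) u0 * (q2 * w1 - q1 * w2) + (starRingEnd ℂ) u1 * (q0 * w2 - q2 * w0)
          + (starRingEnd ℂ) u2 * (q1 * w0 - q0 * w1)
          + (starRingEnd ℂ) w0 * (q2 * u1 - q1 * u2) + (starRingEnd ℂ) w1 * (q0 * u2 - q2 * u0)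
          + (starRingEnd ℂ) w2 * (q1 * u0 - q0 * u1)) with hE
  have key : ((s:ℂ) + 1) * E =
      ((Complex.normSq z0 + Complex.normSq z1 + Complex.normSq z2 + Complex.normSq zu : ℝ) : ℂ)
        + ((s:ℂ)+1) * ((Complex.normSq zw : ℝ) : ℂ) := by
    push_cast
    simp only [← Complex.mul_conj, hz0, hz1, hz2, hzu, hzw, hE, map_add, _root_.map_mul, map_sub,
      _root_.map_one, Complex.conj_I, Complex.conj_conj, Complex.conj_ofReal, q0, q1, q2]
    push_cast
    linear_combination ((starRingEnd ℂ) u0 * u0 + (starRingEnd ℂ) u1 * u1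
      + (starRingEnd ℂ) u2 * u2) * hs2c +
      ((starRingEnd ℂ) u0 * u0 * (q1^2 + q2^2) + (starRingEnd ℂ) u1 * u1 * (q0^2 + q2^2)
        + (starRingEnd ℂ) u2 * u2 * (q0^2 + q1^2)
        - ((starRingEnd ℂ) u0 * u1 + u0 * (starRingEnd ℂ) u1) * (q0*q1)
        - ((starRingEnd ℂ) u0 * u2 + u0 * (starRingEnd ℂ) u2) * (q0*q2)
        - ((starRingEnd ℂ) u1 * u2 + u1 * (starRingEnd ℂ) u2) * (q1*q2)) * Complex.I_sq
  have hre := congrArg Complex.re key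
  have him := congrArg Complex.im key
  simp only [Complex.add_re, Complex.add_im, Complex.mul_re, Complex.mul_im,
    Complex.ofReal_re, Complex.ofReal_im, Complex.one_re, Complex.one_im] at hre him
  rw [Complex.le_def]
  constructor
  · simp only [Complex.zero_re]
    nlinarith [Complex.normSq_nonneg z0, Complex.normSq_nonneg z1, Complex.normSq_nonneg z2,
      Complex.normSq_nonneg zu, Complex.normSq_nonneg zw, hre, him, hs1]
  · simp only [Complex.zero_im]
    nlinarith [him, hs1]

set_option maxHeartbeats 1000000 in
open Matrix in
theorem micropolar_symbol_coercive (ξ : R3) :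
    (Am ξ).IsHermitian ∧
    (∀ μ ∈ spectrum ℂ (Am ξ), μ.im = 0 ∧ ‖ξ‖ ^ 2 + 1 - Real.sqrt (‖ξ‖ ^ 2 + 1) ≤ μ.re) ∧
    ‖ξ‖ ^ 2 / 2 ≤ ‖ξ‖ ^ 2 + 1 - Real.sqrt (‖ξ‖ ^ 2 + 1) ∧
    ∀ t : ℝ, 0 ≤ t →
      ‖Matrix.toEuclideanCLM (𝕜 := ℂ) (expM t ξ)‖ ≤
          Real.exp (-t * (‖ξ‖ ^ 2 + 1 - Real.sqrt (‖ξ‖ ^ 2 + 1))) ∧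
        Real.exp (-t * (‖ξ‖ ^ 2 + 1 - Real.sqrt (‖ξ‖ ^ 2 + 1))) ≤
          Real.exp (-t * ‖ξ‖ ^ 2 / 2) := by
  classical
  set c : ℝ := ‖ξ‖ ^ 2 + 1 - Real.sqrt (‖ξ‖ ^ 2 + 1) with hcdef
  have hs1 : 1 ≤ Real.sqrt (‖ξ‖ ^ 2 + 1) := by
    nlinarith [Real.sq_sqrt (show (0:ℝ) ≤ ‖ξ‖^2+1 by positivity),
      Real.sqrt_nonneg (‖ξ‖^2+1), sq_nonneg (‖ξ‖ : ℝ)]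
  have hs2 : (Real.sqrt (‖ξ‖ ^ 2 + 1))^2 = ‖ξ‖^2 + 1 := Real.sq_sqrt (by positivity)
  have hchalf : ‖ξ‖ ^ 2 / 2 ≤ c := by
    rw [hcdef]
    nlinarith [sq_nonneg (Real.sqrt (‖ξ‖ ^ 2 + 1) - 1)]
  have hH : (Am ξ).IsHermitian := by
    ext i j
    rcases i with i | i <;> rcases j with j | j <;> fin_cases i <;> fin_cases j <;>
      simp [Matrix.IsHermitian, Am, Bm, Cm, Matrix.conjTranspose_apply, Matrix.fromBlocks,
        Matrix.one_apply, mul_comm]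
  have hPSD := micropolar_posSemidef ξ
  -- every eigenvalue is at least c
  have heig : ∀ i, c ≤ hH.eigenvalues i := by
    intro i
    have hv1 : dotProduct (star (⇑(hH.eigenvectorBasis i))) (⇑(hH.eigenvectorBasis i))
        = 1 := by
      have hnorm := hH.eigenvectorBasis.orthonormal.1 i
      have h2 : (inner ℂ (hH.eigenvectorBasis i) (hH.eigenvectorBasis i) : ℂ) = 1 := by
        rw [inner_self_eq_norm_sq_to_K, hnorm]; norm_num
      rw [EuclideanSpace.inner_eq_star_dotProduct] at h2
      rw [dotProduct_comm]; exact h2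
    open scoped ComplexOrder in
    have h0 := (Matrix.posSemidef_iff_dotProduct_mulVec.mp hPSD).2 (⇑(hH.eigenvectorBasis i))
    rw [Matrix.sub_mulVec, Matrix.smul_mulVec, Matrix.one_mulVec, dotProduct_sub,
      dotProduct_smul, hv1] at h0
    rw [Complex.le_def] at h0
    have hre := h0.1
    have heq := hH.eigenvalues_eq i
    simp only [Complex.zero_re, Complex.sub_re, Complex.smul_re, smul_eq_mul,
      Complex.ofReal_re, Complex.one_re, mul_one, RCLike.re_to_complex] at hre heq
    rw [hcdef]
    linarith [hre, heq.symm.le]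
  -- spectrum description
  have hspec : spectrum ℂ (Am ξ) = Set.range (fun i => ((hH.eigenvalues i : ℝ) : ℂ)) := by
    conv_lhs => rw [hH.spectral_theorem]
    rw [Unitary.conjStarAlgAut_apply, Unitary.spectrum_star_right_conjugate, spectrum_diagonal]
    ext z
    simp [Function.comp]
  refine ⟨hH, ?_, hchalf, ?_⟩
  · intro μ hμ
    rw [hspec] at hμ
    obtain ⟨i, rfl⟩ := hμ
    exact ⟨Complex.ofReal_im _, by simpa using heig i⟩
  · intro t ht
    constructor
    · -- the diagonalization of the exponential
      set U : Matrix (Fin 3 ⊕ Fin 3) (Fin 3 ⊕ Fin 3) ℂ := (hH.eigenvectorUnitary : Matrix (Fin 3 ⊕ Fin 3) (Fin 3 ⊕ Fin 3) ℂ)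
        with hUdef
      have hU2 : U * star U = 1 := (Matrix.mem_unitaryGroup_iff).mp (hH.eigenvectorUnitary).2
      have hU1 : star U * U = 1 := (Matrix.mem_unitaryGroup_iff').mp (hH.eigenvectorUnitary).2
      have hUnit : IsUnit U := ⟨⟨U, star U, hU2, hU1⟩, rfl⟩
      have hUinv : U⁻¹ = star U := Matrix.inv_eq_left_inv hU1
      have hdiag : expM t ξ =
          U * Matrix.diagonal (fun i => Complex.exp (-(t:ℂ) * (hH.eigenvalues i : ℂ))) * star U := by
        rw [expM]
        have h1 : (-(t:ℂ)) • Am ξ =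
            U * ((-(t:ℂ)) • Matrix.diagonal (RCLike.ofReal ∘ hH.eigenvalues)) * star U := by
          rw [mul_smul_comm, smul_mul_assoc]
          exact congrArg ((-(t:ℂ)) • ·) hH.spectral_theorem
        rw [h1, ← hUinv, Matrix.exp_conj U _ hUnit, hUinv]
        congr 1
        congr 1
        rw [← Matrix.diagonal_smul, Matrix.exp_diagonal]
        congr 1
        funext i
        rw [Pi.exp_def]
        simp [← Complex.exp_eq_exp_ℂ]
      rw [hdiag, _root_.map_mul, _root_.map_mul, map_star]
      set uC := Matrix.toEuclideanCLM (𝕜 := ℂ) U with huC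
      have hu : uC ∈ unitary (EuclideanSpace ℂ (Fin 3 ⊕ Fin 3) →L[ℂ] EuclideanSpace ℂ (Fin 3 ⊕ Fin 3)) := by
        rw [Unitary.mem_iff]
        constructor
        · rw [huC, ← map_star, ← _root_.map_mul, hU1, _root_.map_one]
        · rw [huC, ← map_star, ← _root_.map_mul, hU2, _root_.map_one]
      rw [mul_assoc]
      rw [show uC = ((⟨uC, hu⟩ : unitary _) : EuclideanSpace ℂ (Fin 3 ⊕ Fin 3) →L[ℂ] EuclideanSpace ℂ (Fin 3 ⊕ Fin 3)) from rfl]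
      rw [CStarRing.norm_coe_unitary_mul]
      rw [show star ((⟨uC, hu⟩ : unitary _) : EuclideanSpace ℂ (Fin 3 ⊕ Fin 3) →L[ℂ] EuclideanSpace ℂ (Fin 3 ⊕ Fin 3))
        = ((star (⟨uC, hu⟩ : unitary _) : unitary _) : EuclideanSpace ℂ (Fin 3 ⊕ Fin 3) →L[ℂ] EuclideanSpace ℂ (Fin 3 ⊕ Fin 3)) from rfl]
      rw [CStarRing.norm_mul_coe_unitary]
      apply micropolar_diag_norm_le _ _ (Real.exp_nonneg _)
      intro i
      rw [show (-(t:ℂ) * (hH.eigenvalues i : ℂ)) = (((-t * hH.eigenvalues i : ℝ)) : ℂ) by push_cast; ring]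
      rw [Complex.norm_exp]
      rw [Complex.ofReal_re]
      apply Real.exp_le_exp.2
      have := heig i
      nlinarith [heig i, ht]
    · apply Real.exp_le_exp.2
      rw [hcdef] at hchalf ⊢
      nlinarith [mul_nonneg ht (sub_nonneg.2 hchalf)]
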